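/- Let A ⊂ ℝ^d be finite and spanning, π_off a probability distribution on A, α ∈ [0,1), and let π* maximize π ↦ log det((1-α)V_π + α V_{π_off}) over probability distributions π supported on a subset A_l ⊆ A whose mixture Gram matrix is invertible. Writing π̃* = (1-α)π* + α π_off and V = V_{π̃*}, the first-order optimality conditions imply d = (1-α) · max_{a∈A_l} aᵀV⁻¹a + α ∑_{a∈A} π_off(a) aᵀV⁻¹a. -/

import Mathlib

open Matrix BigOperators

lemma trace_mul_vecMulVec {d : ℕ} (M : Matrix (Fin d) (Fin d) ℝ) (a : Fin d → ℝ) :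
    (M * vecMulVec a a).trace = a ⬝ᵥ M.mulVec a := by
  simp only [Matrix.trace, Matrix.diag, Matrix.mul_apply, vecMulVec_apply, dotProduct, mulVec,
    Finset.mul_sum]
  apply Finset.sum_congr rfl; intro i _; apply Finset.sum_congr rfl; intro j _; ring

lemma trace_mul_sum_vecMulVec {d : ℕ} (M : Matrix (Fin d) (Fin d) ℝ)
    (s : Finset (Fin d → ℝ)) (w : (Fin d → ℝ) → ℝ) :
    (M * ∑ a ∈ s, w a • vecMulVec a a).trace = ∑ a ∈ s, w a * (a ⬝ᵥ M.mulVec a) := by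
  rw [Matrix.mul_sum, Matrix.trace_sum]
  apply Finset.sum_congr rfl; intro a _
  rw [Matrix.mul_smul, Matrix.trace_smul, trace_mul_vecMulVec, smul_eq_mul]

lemma posSemidef_vecMulVec {d : ℕ} (a : Fin d → ℝ) : (vecMulVec a a).PosSemidef := by
  rw [posSemidef_iff_dotProduct_mulVec]
  constructor
  · ext i j; simp [vecMulVec_apply, Matrix.conjTranspose, mul_comm]
  · intro x
    have : x ⬝ᵥ (vecMulVec a a).mulVec x = (a ⬝ᵥ x) * (a ⬝ᵥ x) := by
      rw [dotProduct, dotProduct, Finset.sum_mul_sum]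
      simp only [dotProduct, mulVec, vecMulVec_apply, Finset.mul_sum]
      apply Finset.sum_congr rfl; intro i _; apply Finset.sum_congr rfl; intro j _; ring
    simp [this, mul_self_nonneg]

lemma posSemidef_smul' {d : ℕ} {M : Matrix (Fin d) (Fin d) ℝ} (hM : M.PosSemidef) {c : ℝ}
    (hc : 0 ≤ c) : (c • M).PosSemidef := by
  rw [posSemidef_iff_dotProduct_mulVec]
  constructor
  · show (c • M)ᴴ = c • M
    rw [Matrix.conjTranspose_smul, star_trivial, hM.1]
  · intro x
    have := (posSemidef_iff_dotProduct_mulVec.mp hM).2 x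
    simp only [smul_mulVec, dotProduct_smul, smul_eq_mul]
    positivity

lemma posDef_smul' {d : ℕ} {M : Matrix (Fin d) (Fin d) ℝ} (hM : M.PosDef) {c : ℝ} (hc : 0 < c) :
    (c • M).PosDef := by
  rw [posDef_iff_dotProduct_mulVec]
  constructor
  · show (c • M)ᴴ = c • M
    rw [Matrix.conjTranspose_smul, star_trivial, hM.1]
  · intro x hx
    have := (posDef_iff_dotProduct_mulVec.mp hM).2 hx
    simp only [smul_mulVec, dotProduct_smul, smul_eq_mul]
    positivity

lemma posSemidef_weighted_sum {d : ℕ} (s : Finset (Fin d → ℝ)) (w : (Fin d → ℝ) → ℝ)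
    (hw : ∀ a ∈ s, 0 ≤ w a) : (∑ a ∈ s, w a • vecMulVec a a).PosSemidef := by
  refine Finset.sum_induction _ _ (fun x y hx hy => hx.add hy) Matrix.PosSemidef.zero ?_
  intro a ha
  exact posSemidef_smul' (posSemidef_vecMulVec a) (hw a ha)

theorem stmt1 {d : ℕ} (A Al : Finset (Fin d → ℝ)) (hsub : Al ⊆ A) (hne : Al.Nonempty)
    (hspan : Submodule.span ℝ (A : Set (Fin d → ℝ)) = ⊤)
    (πoff πstar : (Fin d → ℝ) → ℝ) (α : ℝ) (hα : 0 ≤ α) (hα1 : α < 1)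
    (hπoff0 : ∀ a ∈ A, 0 ≤ πoff a) (hπoff1 : ∑ a ∈ A, πoff a = 1)
    (hπs0 : ∀ a ∈ Al, 0 ≤ πstar a) (hπs1 : ∑ a ∈ Al, πstar a = 1)
    (hπsupp : ∀ a ∉ Al, πstar a = 0)
    (V : Matrix (Fin d) (Fin d) ℝ)
    (hV : V = ∑ a ∈ A, ((1 - α) * πstar a + α * πoff a) • vecMulVec a a)
    (hVpd : V.PosDef)
    (hopt : ∀ π : (Fin d → ℝ) → ℝ, (∀ a ∈ Al, 0 ≤ π a) → (∑ a ∈ Al, π a = 1) →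
      (∀ a ∉ Al, π a = 0) →
      (∑ a ∈ A, ((1 - α) * π a + α * πoff a) • vecMulVec a a).PosDef →
      Real.log (∑ a ∈ A, ((1 - α) * π a + α * πoff a) • vecMulVec a a).det ≤
        Real.log V.det) :
    (d : ℝ) = (1 - α) * Al.sup' hne (fun a => a ⬝ᵥ V⁻¹.mulVec a)
      + α * ∑ a ∈ A, πoff a * (a ⬝ᵥ V⁻¹.mulVec a) := by
  have hdet : IsUnit V.det := isUnit_iff_ne_zero.mpr hVpd.det_pos.ne'
  set g : (Fin d → ℝ) → ℝ := fun a => a ⬝ᵥ V⁻¹.mulVec a with hg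
  set Mx : ℝ := Al.sup' hne g with hMx
  set S : ℝ := ∑ a ∈ Al, πstar a * g a with hS
  set T : ℝ := ∑ a ∈ A, πoff a * g a with hT
  -- trace identity
  have key1 : (d : ℝ) = (1 - α) * S + α * T := by
    have h1 : V⁻¹ * V = 1 := Matrix.nonsing_inv_mul V hdet
    have h2 : ((1 : Matrix (Fin d) (Fin d) ℝ)).trace = (d : ℝ) := by
      simp [Matrix.trace_one]
    calc (d : ℝ) = (V⁻¹ * V).trace := by rw [h1, h2]
      _ = ∑ a ∈ A, ((1 - α) * πstar a + α * πoff a) * g a := by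
          nth_rewrite 2 [hV]
          rw [trace_mul_sum_vecMulVec]
      _ = (1 - α) * (∑ a ∈ A, πstar a * g a) + α * T := by
          rw [hT, Finset.mul_sum, Finset.mul_sum, ← Finset.sum_add_distrib]
          apply Finset.sum_congr rfl; intro a _; ring
      _ = (1 - α) * S + α * T := by
          rw [hS]
          congr 1
          congr 1
          rw [← Finset.sum_subset hsub]
          intro a _ ha
          rw [hπsupp a ha, zero_mul]
  have hSle : S ≤ Mx := by
    calc S ≤ ∑ a ∈ Al, πstar a * Mx := by
          apply Finset.sum_le_sum
          intro a ha
          exact mul_le_mul_of_nonneg_left (Finset.le_sup' g ha) (hπs0 a ha)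
      _ = Mx := by rw [← Finset.sum_mul, hπs1, one_mul]
  have hMle : Mx ≤ S := by
    by_contra hlt
    push_neg at hlt
    obtain ⟨b, hbAl, hbM⟩ := Finset.exists_mem_eq_sup' hne g
    have hbA : b ∈ A := hsub hbAl
    set W : Matrix (Fin d) (Fin d) ℝ :=
      ∑ a ∈ A, ((1 - α) * (if a = b then 1 else 0) + α * πoff a) • vecMulVec a a with hW
    -- trace of V⁻¹ * W
    have htrW : (V⁻¹ * W).trace = (1 - α) * g b + α * T := by
      rw [hW, trace_mul_sum_vecMulVec, hT, Finset.mul_sum]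
      calc ∑ a ∈ A, ((1 - α) * (if a = b then 1 else 0) + α * πoff a) * g a
          = ∑ a ∈ A, ((if a = b then (1 - α) * g a else 0) + α * (πoff a * g a)) := by
            apply Finset.sum_congr rfl; intro a _; split_ifs <;> ring
        _ = (1 - α) * g b + ∑ a ∈ A, α * (πoff a * g a) := by
            rw [Finset.sum_add_distrib, Finset.sum_ite_eq' A b (fun a => (1 - α) * g a),
              if_pos hbA]
    have hVV : (V⁻¹ * V).trace = (d : ℝ) := by
      rw [Matrix.nonsing_inv_mul V hdet]; simp
    have hgbS : S < g b := by rw [hMx, hbM] at hlt; exact hlt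
    set N : Matrix (Fin d) (Fin d) ℝ := V⁻¹ * (W - V) with hN
    have htrN : N.trace = (1 - α) * (g b - S) := by
      rw [hN, Matrix.mul_sub, Matrix.trace_sub, htrW, hVV]
      rw [key1]; ring
    have htrNpos : 0 < N.trace := by
      rw [htrN]
      have : 0 < 1 - α := by linarith
      have : 0 < g b - S := by linarith
      positivity
    set p : Polynomial ℝ :=
      (Matrix.det (1 + (Polynomial.X : Polynomial ℝ) • N.map Polynomial.C)).divX.divX with hp
    have hdetf : ∀ t : ℝ, (V + t • (W - V)).det
        = V.det * (1 + N.trace * t + p.eval t * t ^ 2) := by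
      intro t
      have hfact : V + t • (W - V) = V * (1 + t • N) := by
        rw [Matrix.mul_add, Matrix.mul_one, Matrix.mul_smul,
          Matrix.mul_nonsing_inv_cancel_left _ _ hdet]
      rw [hfact, Matrix.det_mul, Matrix.det_one_add_smul]
    -- choose small t
    set f : ℝ → ℝ := fun t => N.trace + p.eval t * t with hf
    have hcont : Continuous f := by
      exact continuous_const.add ((p.continuous).mul continuous_id)
    have hf0 : 0 < f 0 := by simp [hf, htrNpos]
    have hev : ∀ᶠ t in nhds 0, 0 < f t := by
      have := (hcont.tendsto 0).eventually (eventually_gt_nhds hf0)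
      simpa using this
    obtain ⟨ε, hε, hball⟩ := Metric.eventually_nhds_iff.mp hev
    set t : ℝ := min (ε / 2) (1 / 2) with htdef
    have ht0 : 0 < t := by positivity
    have ht1 : t < 1 := lt_of_le_of_lt (min_le_right _ _) (by norm_num)
    have htε : dist t 0 < ε := by
      rw [Real.dist_eq, sub_zero, abs_of_pos ht0]
      exact lt_of_le_of_lt (min_le_left _ _) (by linarith)
    have hft : 0 < f t := hball htε
    -- the perturbed distribution
    set πt : (Fin d → ℝ) → ℝ := fun a => (1 - t) * πstar a + t * (if a = b then 1 else 0)
      with hπt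
    have hπt0 : ∀ a ∈ Al, 0 ≤ πt a := by
      intro a ha
      have h1 : (0:ℝ) ≤ if a = b then 1 else 0 := by split_ifs <;> norm_num
      have := hπs0 a ha
      have h2 : (0:ℝ) ≤ 1 - t := by linarith
      positivity
    have hπt1 : ∑ a ∈ Al, πt a = 1 := by
      simp only [hπt]
      rw [Finset.sum_add_distrib, ← Finset.mul_sum, hπs1, ← Finset.mul_sum,
        Finset.sum_ite_eq' Al b (fun _ => (1:ℝ)), if_pos hbAl]
      ring
    have hπtsupp : ∀ a ∉ Al, πt a = 0 := by
      intro a ha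
      simp only [hπt]
      rw [hπsupp a ha, if_neg (by intro h; subst h; exact ha hbAl)]
      ring
    have hVt : ∑ a ∈ A, ((1 - α) * πt a + α * πoff a) • vecMulVec a a
        = (1 - t) • V + t • W := by
      rw [hV, hW, Finset.smul_sum, Finset.smul_sum, ← Finset.sum_add_distrib]
      apply Finset.sum_congr rfl; intro a _
      rw [smul_smul, smul_smul, ← add_smul]
      congr 1
      simp only [hπt]
      ring
    have hVt2 : (1 - t) • V + t • W = V + t • (W - V) := by
      rw [smul_sub, sub_smul, one_smul]
      abel
    have hWpsd : W.PosSemidef := by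
      rw [hW]
      apply posSemidef_weighted_sum
      intro a ha
      have h1 : (0:ℝ) ≤ if a = b then 1 else 0 := by split_ifs <;> norm_num
      have h2 : (0:ℝ) ≤ 1 - α := by linarith
      have := hπoff0 a ha
      positivity
    have hVtpd : ((1 - t) • V + t • W).PosDef :=
      (posDef_smul' hVpd (by linarith)).add_posSemidef (posSemidef_smul' hWpsd ht0.le)
    have hdetlt : V.det < ((1 - t) • V + t • W).det := by
      rw [hVt2, hdetf t]
      have h1 : 1 + N.trace * t + p.eval t * t ^ 2 = 1 + f t * t := by
        simp only [hf]; ring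
      rw [h1]
      nth_rewrite 1 [show V.det = V.det * 1 by ring]
      apply mul_lt_mul_of_pos_left _ hVpd.det_pos
      nlinarith [mul_pos hft ht0]
    have hlog := hopt πt hπt0 hπt1 hπtsupp (hVt ▸ hVtpd)
    rw [hVt] at hlog
    have := Real.log_lt_log hVpd.det_pos hdetlt
    linarith
  have hSM : S = Mx := le_antisymm hSle hMle
  rw [key1, hSM]
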